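/- arXiv:2207.13179 — 3 statements merged into one kernel-verified Lean document; each statement's English description precedes it below -/
import Mathlib

section
/- If x and x' both lie in the anchor set A_y of the same label y (with q(x) > 0 and q(x') > 0), then under label shift their domain posterior vectors coincide: q(d | X = x) = q(d | X = x') for every domain d. -/
/-- Under label shift, two points of the same anchor set A_y have
identical domain posterior vectors: q(d|x) = q(d|x') for every d. -/
theorem stmt_7 (X Y D : Type) [Fintype X] [Fintype Y] [Fintype D]
    (q : X → Y → D → ℝ)
    (hq0 : ∀ x y d, 0 ≤ q x y d)
    (hqY : ∀ y, 0 < ∑ x, ∑ d, q x y d)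
    (hLS : ∀ x y d, 0 < (∑ d', q x y d') →
      q x y d / (∑ d', q x y d') = (∑ x', q x' y d) / (∑ x', ∑ d', q x' y d'))
    (y : Y) (x x' : X)
    (hx : 0 < ∑ y', ∑ d, q x y' d)
    (hx' : 0 < ∑ y', ∑ d, q x' y' d)
    (hxA : 0 < (∑ d, q x y d) / (∑ x'', ∑ d, q x'' y d) ∧
      ∀ y' ≠ y, (∑ d, q x y' d) / (∑ x'', ∑ d, q x'' y' d) = 0)
    (hx'A : 0 < (∑ d, q x' y d) / (∑ x'', ∑ d, q x'' y d) ∧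
      ∀ y' ≠ y, (∑ d, q x' y' d) / (∑ x'', ∑ d, q x'' y' d) = 0) :
    ∀ d, (∑ y', q x y' d) / (∑ y', ∑ d', q x y' d') =
      (∑ y', q x' y' d) / (∑ y', ∑ d', q x' y' d') := by
  have key : ∀ z : X, (∀ y' ≠ y, (∑ d, q z y' d) / (∑ x'', ∑ d, q x'' y' d) = 0) →
      ∀ y' ≠ y, ∀ d, q z y' d = 0 := by
    intro z hz y' hy' d
    have h0 : (∑ d, q z y' d) = 0 := by
      rcases div_eq_zero_iff.mp (hz y' hy') with h | h
      · exact h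
      · exact absurd h (ne_of_gt (hqY y'))
    have := (Finset.sum_eq_zero_iff_of_nonneg (fun d _ => hq0 z y' d)).mp h0
    exact this d (Finset.mem_univ d)
  have hz := key x hxA.2
  have hz' := key x' hx'A.2
  have e1 : ∀ d, (∑ y', q x y' d) = q x y d := fun d =>
    Fintype.sum_eq_single y (fun y' hy' => hz y' hy' d)
  have e1' : ∀ d, (∑ y', q x' y' d) = q x' y d := fun d =>
    Fintype.sum_eq_single y (fun y' hy' => hz' y' hy' d)
  have e2 : (∑ y', ∑ d', q x y' d') = ∑ d', q x y d' :=
    Fintype.sum_eq_single y (fun y' hy' => Finset.sum_eq_zero fun d _ => hz y' hy' d)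
  have e2' : (∑ y', ∑ d', q x' y' d') = ∑ d', q x' y d' :=
    Fintype.sum_eq_single y (fun y' hy' => Finset.sum_eq_zero fun d _ => hz' y' hy' d)
  have hpos : 0 < ∑ d', q x y d' := e2 ▸ hx
  have hpos' : 0 < ∑ d', q x' y d' := e2' ▸ hx'
  intro d
  rw [e1 d, e1' d, e2, e2', hLS x y d hpos, hLS x' y d hpos']
end

section
/- Suppose the matrix Q_{D|Y} ∈ ℝ^{r×k} has linearly independent columns, x lies in the anchor set A_y of label y, and x₀ (with q(x₀) > 0) does not lie in A_y. Then the domain posterior vectors differ: there exists a domain d with q(d | X = x) ≠ q(d | X = x₀). -/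
/-- If Q_{D|Y} has linearly independent columns, x is in the
anchor set A_y and x₀ (with q(x₀) > 0) is not, then the domain posterior
vectors of x and x₀ differ in some coordinate d. -/
theorem stmt_8 (X Y D : Type) [Fintype X] [Fintype Y] [Fintype D]
    (q : X → Y → D → ℝ)
    (hq0 : ∀ x y d, 0 ≤ q x y d)
    (hqY : ∀ y, 0 < ∑ x, ∑ d, q x y d)
    (hrk : Fintype.card Y ≤ Fintype.card D)
    (hLS : ∀ x y d, 0 < (∑ d', q x y d') →
      q x y d / (∑ d', q x y d') = (∑ x', q x' y d) / (∑ x', ∑ d', q x' y d'))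
    (QDY : Matrix D Y ℝ)
    (hQDY : ∀ d y, QDY d y = (∑ x, q x y d) / (∑ x, ∑ d', q x y d'))
    (hcols : LinearIndependent ℝ (fun y : Y => fun d : D => QDY d y))
    (y : Y) (x x₀ : X)
    (hx : 0 < ∑ y', ∑ d, q x y' d)
    (hx₀ : 0 < ∑ y', ∑ d, q x₀ y' d)
    (hxA : 0 < (∑ d, q x y d) / (∑ x'', ∑ d, q x'' y d) ∧
      ∀ y' ≠ y, (∑ d, q x y' d) / (∑ x'', ∑ d, q x'' y' d) = 0)
    (hx₀A : ¬ (0 < (∑ d, q x₀ y d) / (∑ x'', ∑ d, q x'' y d) ∧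
      ∀ y' ≠ y, (∑ d, q x₀ y' d) / (∑ x'', ∑ d, q x'' y' d) = 0)) :
    ∃ d, (∑ y', q x y' d) / (∑ y', ∑ d', q x y' d') ≠
      (∑ y', q x₀ y' d) / (∑ y', ∑ d', q x₀ y' d') := by
  by_contra h
  push_neg at h
  -- nonnegativity of marginals
  have hqxnn : ∀ x' y', (0:ℝ) ≤ ∑ d, q x' y' d :=
    fun x' y' => Finset.sum_nonneg fun d _ => hq0 x' y' d
  -- key factorization: q x' y' d = QDY d y' * (∑ d, q x' y' d)
  have key : ∀ x' y' d, q x' y' d = QDY d y' * (∑ d', q x' y' d') := by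
    intro x' y' d
    rcases eq_or_lt_of_le (hqxnn x' y') with h0 | hpos
    · have hz : q x' y' d = 0 := by
        have := (Finset.sum_eq_zero_iff_of_nonneg (fun d _ => hq0 x' y' d)).mp h0.symm
        exact this d (Finset.mem_univ d)
      rw [hz, ← h0, mul_zero]
    · have h1 := hLS x' y' d hpos
      rw [← hQDY] at h1
      exact (div_eq_iff (ne_of_gt hpos)).mp h1
  -- the posterior vector factors through QDY
  have hf : ∀ x' d, (∑ y', q x' y' d) =
      ∑ y', QDY d y' * (∑ d', q x' y' d') := by
    intro x' d
    exact Finset.sum_congr rfl fun y' _ => key x' y' d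
  -- coefficients
  set c : Y → ℝ := fun y' =>
    (∑ d, q x y' d) / (∑ y'', ∑ d, q x y'' d) -
    (∑ d, q x₀ y' d) / (∑ y'', ∑ d, q x₀ y'' d) with hc
  have hsum0 : ∀ d, ∑ y', c y' * QDY d y' = 0 := by
    intro d
    have hd := h d
    have e1 : (∑ y', q x y' d) / (∑ y', ∑ d', q x y' d')
        = ∑ y', QDY d y' * ((∑ d', q x y' d') / (∑ y'', ∑ d', q x y'' d')) := by
      rw [hf x d, Finset.sum_div]
      exact Finset.sum_congr rfl fun y' _ => by rw [mul_div_assoc]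
    have e2 : (∑ y', q x₀ y' d) / (∑ y', ∑ d', q x₀ y' d')
        = ∑ y', QDY d y' * ((∑ d', q x₀ y' d') / (∑ y'', ∑ d', q x₀ y'' d')) := by
      rw [hf x₀ d, Finset.sum_div]
      exact Finset.sum_congr rfl fun y' _ => by rw [mul_div_assoc]
    rw [e1, e2] at hd
    have : ∑ y', c y' * QDY d y' =
        (∑ y', QDY d y' * ((∑ d', q x y' d') / (∑ y'', ∑ d', q x y'' d'))) -
        (∑ y', QDY d y' * ((∑ d', q x₀ y' d') / (∑ y'', ∑ d', q x₀ y'' d'))) := by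
      rw [← Finset.sum_sub_distrib]
      exact Finset.sum_congr rfl fun y' _ => by simp [hc]; ring
    rw [this, hd, sub_self]
  -- linear independence forces c = 0
  have hc0 : ∀ y', c y' = 0 := by
    have := Fintype.linearIndependent_iff.mp hcols c ?_
    · exact this
    · funext d
      have := hsum0 d
      simpa [Finset.sum_apply, mul_comm] using this
  -- anchor facts for x
  have hdenpos : ∀ y', (0:ℝ) < ∑ x'', ∑ d, q x'' y' d := hqY
  have hxzero : ∀ y' ≠ y, (∑ d, q x y' d) = 0 := by
    intro y' hy'
    have := hxA.2 y' hy'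
    rcases div_eq_zero_iff.mp this with h0 | h0
    · exact h0
    · exact absurd h0 (ne_of_gt (hdenpos y'))
  have hqXx : (∑ y'', ∑ d, q x y'' d) = ∑ d, q x y d := by
    rw [Finset.sum_eq_single y]
    · intro y' _ hy'; exact hxzero y' hy'
    · intro hy; exact absurd (Finset.mem_univ y) hy
  have hqxy_pos : (0:ℝ) < ∑ d, q x y d := by
    have := hx; rw [hqXx] at this; exact this
  -- g x = point mass at y
  have hgx_y : (∑ d, q x y d) / (∑ y'', ∑ d, q x y'' d) = 1 := by
    rw [hqXx, div_self (ne_of_gt hqxy_pos)]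
  -- now case analysis on x₀
  rw [not_and_or] at hx₀A
  rcases hx₀A with h1 | h1
  · -- q(x₀, y) = 0
    have hfr0 : (∑ d, q x₀ y d) / (∑ x'', ∑ d, q x'' y d) = 0 := by
      have hnn : (0:ℝ) ≤ (∑ d, q x₀ y d) / (∑ x'', ∑ d, q x'' y d) :=
        div_nonneg (hqxnn x₀ y) (le_of_lt (hdenpos y))
      rcases eq_or_lt_of_le hnn with h' | h'
      · exact h'.symm
      · exact absurd h' h1
    have hx₀y0 : (∑ d, q x₀ y d) = 0 := by
      rcases div_eq_zero_iff.mp hfr0 with h0 | h0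
      · exact h0
      · exact absurd h0 (ne_of_gt (hdenpos y))
    have := hc0 y
    rw [hc] at this
    simp only [sub_eq_zero] at this
    rw [hgx_y, hx₀y0, zero_div] at this
    exact one_ne_zero this
  · push_neg at h1
    obtain ⟨y', hy', hfr⟩ := h1
    have hx₀y'pos : (0:ℝ) < ∑ d, q x₀ y' d := by
      rcases eq_or_lt_of_le (hqxnn x₀ y') with h0 | h0
      · exact absurd (by rw [← h0, zero_div]) hfr
      · exact h0
    have := hc0 y'
    rw [hc] at this
    simp only [sub_eq_zero] at this
    rw [hxzero y' hy', zero_div] at this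
    have : (∑ d, q x₀ y' d) / (∑ y'', ∑ d, q x₀ y'' d) = 0 := this.symm
    rcases div_eq_zero_iff.mp this with h0 | h0
    · exact absurd h0 (ne_of_gt hx₀y'pos)
    · exact absurd h0 (ne_of_gt hx₀)
end

section
/- If x lies in the anchor set A_y of label y and q(x) > 0, then under label shift the domain posterior vector at x equals the y-th column of Q_{D|Y}: for every domain d, q(d | X = x) = q(d | Y = y). -/
/-- If x lies in the anchor set A_y (and q(x) > 0), then under
label shift the domain posterior at x is the y-th column of Q_{D|Y}:
q(d|x) = q(d|y) for every d. -/
theorem stmt_9 (X Y D : Type) [Fintype X] [Fintype Y] [Fintype D]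
    (q : X → Y → D → ℝ)
    (hq0 : ∀ x y d, 0 ≤ q x y d)
    (hqY : ∀ y, 0 < ∑ x, ∑ d, q x y d)
    (hLS : ∀ x y d, 0 < (∑ d', q x y d') →
      q x y d / (∑ d', q x y d') = (∑ x', q x' y d) / (∑ x', ∑ d', q x' y d'))
    (y : Y) (x : X)
    (hx : 0 < ∑ y', ∑ d, q x y' d)
    (hxA : 0 < (∑ d, q x y d) / (∑ x'', ∑ d, q x'' y d) ∧
      ∀ y' ≠ y, (∑ d, q x y' d) / (∑ x'', ∑ d, q x'' y' d) = 0) :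
    ∀ d, (∑ y', q x y' d) / (∑ y', ∑ d', q x y' d') =
      (∑ x', q x' y d) / (∑ x', ∑ d', q x' y d') := by
  obtain ⟨-, hA⟩ := hxA
  have hzero : ∀ y' ≠ y, ∀ d, q x y' d = 0 := by
    intro y' hne d
    have hden := hqY y'
    have hnum : ∑ d, q x y' d = 0 := by
      have := hA y' hne
      rcases div_eq_zero_iff.mp this with h | h
      · exact h
      · exact absurd h hden.ne'
    have := (Finset.sum_eq_zero_iff_of_nonneg (fun d _ => hq0 x y' d)).mp hnum
    exact this d (Finset.mem_univ d)
  have h1 : ∀ d, ∑ y', q x y' d = q x y d := by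
    intro d
    exact Finset.sum_eq_single y (fun y' _ hne => hzero y' hne d)
      (fun h => absurd (Finset.mem_univ y) h)
  have h2 : ∑ y', ∑ d', q x y' d' = ∑ d', q x y d' := by
    exact Finset.sum_eq_single y
      (fun y' _ hne => Finset.sum_eq_zero fun d _ => hzero y' hne d)
      (fun h => absurd (Finset.mem_univ y) h)
  have hpos : 0 < ∑ d', q x y d' := h2 ▸ hx
  intro d
  rw [h1 d, h2]
  exact hLS x y d hpos
end
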